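/- Let (Xᵢ)_{i=1..n} be i.i.d. random vectors and g a symmetric measurable kernel of two arguments with E|g(X₁,X₂)| < ∞. Define the U-statistic U_n = (2/(n(n-1))) ∑_{1 ≤ i₁ < i₂ ≤ n} g(X_{i₁}, X_{i₂}), and set ζ₁ = Var[E[g(X₁,X₂) | X₂]] and ζ₂ = Var[g(X₁,X₂)] (both assumed finite). Then Var[U_n] = (2/(n(n-1)))(2(n-2)ζ₁ + ζ₂). -/

import Mathlib

open MeasureTheory ProbabilityTheory

lemma aux_integrable_mul {β : Type*} [MeasurableSpace β] (κ : Measure β) {f h : β → ℝ}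
    (hfm : AEStronglyMeasurable f κ) (hhm : AEStronglyMeasurable h κ)
    (hf : Integrable (fun x => f x ^ 2) κ) (hh : Integrable (fun x => h x ^ 2) κ) :
    Integrable (fun x => f x * h x) κ := by
  have hb : Integrable (fun x => (f x ^ 2 + h x ^ 2) / 2) κ := (hf.add hh).div_const 2
  refine hb.mono' (hfm.mul hhm) (Filter.Eventually.of_forall fun x => ?_)
  show ‖f x * h x‖ ≤ (f x ^ 2 + h x ^ 2) / 2
  rw [Real.norm_eq_abs, abs_mul]
  nlinarith [sq_nonneg (|f x| - |h x|), sq_abs (f x), sq_abs (h x), abs_nonneg (f x),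
    abs_nonneg (h x)]


lemma aux_two_mul_card (n : ℕ) :
    2 * (Finset.univ.filter (fun p : Fin n × Fin n => p.1 < p.2)).card = n * (n - 1) := by
  have h1 : (Finset.univ.filter (fun p : Fin n × Fin n => p.1 < p.2)).card
      = ∑ i : Fin n, (n - 1 - (i : ℕ)) := by
    rw [Finset.card_filter, Fintype.sum_prod_type]
    congr 1
    funext i
    rw [Finset.sum_boole]
    norm_cast
    rw [show (Finset.univ.filter fun j : Fin n => i < j) = Finset.Ioi i from by ext; simp,
      Fin.card_Ioi]
  rw [h1, Fin.sum_univ_eq_sum_range (fun k => n - 1 - k)]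
  rw [show ∑ k ∈ Finset.range n, (n - 1 - k) = ∑ k ∈ Finset.range n, k from ?_]
  · rw [mul_comm, Finset.sum_range_id_mul_two]
  · rcases n with _ | m
    · simp
    · have := Finset.sum_range_reflect (fun k => k) (m + 1)
      simpa using this

lemma aux_card_shares (n : ℕ) (p : Fin n × Fin n) (hp : p.1 < p.2) :
    ((Finset.univ.filter (fun q : Fin n × Fin n => q.1 < q.2)).filter
      (fun q => q ≠ p ∧ (q.1 = p.1 ∨ q.1 = p.2 ∨ q.2 = p.1 ∨ q.2 = p.2))).card = 2 * (n - 2) := by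
  classical
  have hne : p.1 ≠ p.2 := ne_of_lt hp
  have hcard : ((({p.1, p.2} : Finset (Fin n))) ×ˢ (({p.1, p.2} : Finset (Fin n))ᶜ)).card
      = 2 * (n - 2) := by
    rw [Finset.card_product, Finset.card_compl]
    rw [Finset.card_insert_of_notMem (by simp [hne]), Finset.card_singleton]
    simp [Fintype.card_fin]
  rw [← hcard]
  have hp' : (p.1 : ℕ) < (p.2 : ℕ) := hp
  refine (Finset.card_bij'
    (fun r _ => if r.1 < r.2 then (r.1, r.2) else (r.2, r.1))
    (fun q _ => if q.1 = p.1 ∨ q.1 = p.2 then (q.1, q.2) else (q.2, q.1))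
    ?_ ?_ ?_ ?_).symm
  · rintro ⟨s, t⟩ hr
    simp only [Finset.mem_product, Finset.mem_insert, Finset.mem_singleton,
      Finset.mem_compl, not_or] at hr
    simp only [Finset.mem_filter, Finset.mem_univ, true_and, ne_eq, Prod.ext_iff]
    split_ifs with h
    · simp only [Fin.lt_def, Fin.ext_iff] at *
      omega
    · simp only [Fin.lt_def, Fin.ext_iff] at *
      omega
  · rintro ⟨k, l⟩ hq
    simp only [Finset.mem_filter, Finset.mem_univ, true_and, ne_eq, Prod.ext_iff] at hq
    simp only [Finset.mem_product, Finset.mem_insert, Finset.mem_singleton, Finset.mem_compl,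
      not_or]
    split_ifs with h
    · simp only [Fin.lt_def, Fin.ext_iff] at *
      omega
    · simp only [Fin.lt_def, Fin.ext_iff] at *
      omega
  · rintro ⟨s, t⟩ hr
    simp only [Finset.mem_product, Finset.mem_insert, Finset.mem_singleton, Finset.mem_compl,
      not_or] at hr
    simp only []
    split_ifs with h1 h2 h3 <;>
      (simp only [Prod.ext_iff, Fin.lt_def, Fin.ext_iff] at *) <;> omega
  · rintro ⟨k, l⟩ hq
    simp only [Finset.mem_filter, Finset.mem_univ, true_and, ne_eq, Prod.ext_iff] at hq
    dsimp only
    split_ifs with h1 h2 h3 <;>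
      (simp only [Prod.ext_iff, Fin.lt_def, Fin.ext_iff] at *) <;> omega

theorem stmt_12 {Ω α : Type*} [MeasurableSpace Ω] [MeasurableSpace α]
    (μ : Measure Ω) [IsProbabilityMeasure μ] (n : ℕ) (hn : 2 ≤ n)
    (X : Fin n → Ω → α) (hXm : ∀ i, Measurable (X i))
    (hindep : iIndepFun X μ)
    (ν : Measure α) (hid : ∀ i, μ.map (X i) = ν)
    (g : α → α → ℝ) (hg : Measurable (Function.uncurry g))
    (hsymm : ∀ x y, g x y = g y x)
    (hgint : Integrable (fun p : α × α => g p.1 p.2) (ν.prod ν))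
    (hgsq : Integrable (fun p : α × α => (g p.1 p.2) ^ 2) (ν.prod ν))
    (m ζ₁ ζ₂ : ℝ)
    (hm : m = ∫ p : α × α, g p.1 p.2 ∂(ν.prod ν))
    (hζ₁ : ζ₁ = ∫ x, ((∫ y, g y x ∂ν) - m) ^ 2 ∂ν)
    (hζ₂ : ζ₂ = ∫ p : α × α, (g p.1 p.2 - m) ^ 2 ∂(ν.prod ν))
    (U : Ω → ℝ)
    (hU : ∀ ω, U ω = (2 / ((n : ℝ) * ((n : ℝ) - 1))) *
        ∑ p ∈ Finset.univ.filter (fun p : Fin n × Fin n => p.1 < p.2),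
          g (X p.1 ω) (X p.2 ω)) :
    ∫ ω, (U ω - m) ^ 2 ∂μ
      = (2 / ((n : ℝ) * ((n : ℝ) - 1))) * (2 * ((n : ℝ) - 2) * ζ₁ + ζ₂) := by
  classical
  have i0 : Fin n := ⟨0, by omega⟩
  haveI hνP : IsProbabilityMeasure ν := by
    rw [← hid i0]; exact Measure.isProbabilityMeasure_map (hXm i0).aemeasurable
  have hgm : Measurable (fun p : α × α => g p.1 p.2) := hg
  -- pair map
  have map2 : ∀ i j : Fin n, i ≠ j → μ.map (fun ω => (X i ω, X j ω)) = ν.prod ν := by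
    intro i j hij
    rw [(indepFun_iff_map_prod_eq_prod_map_map (hXm i).aemeasurable
      (hXm j).aemeasurable).mp (hindep.indepFun hij), hid i, hid j]
  -- triple map
  have map3 : ∀ a b c : Fin n, a ≠ b → a ≠ c → b ≠ c →
      μ.map (fun ω => (X b ω, (X a ω, X c ω))) = ν.prod (ν.prod ν) := by
    intro a b c hab hac hbc
    have hind : IndepFun (X b) (fun ω => (X a ω, X c ω)) μ :=
      (hindep.indepFun_prodMk hXm a c b hab hbc.symm).symm
    rw [(indepFun_iff_map_prod_eq_prod_map_map (hXm b).aemeasurable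
      ((hXm a).prodMk (hXm c)).aemeasurable).mp hind, hid b, map2 a c hac]
  -- projections of the triple product
  have hmapA : (ν.prod (ν.prod ν)).map (fun q : α × α × α => (q.2.1, q.1)) = ν.prod ν := by
    refine (Measure.prod_eq fun s t hs ht => ?_).symm
    rw [Measure.map_apply (by fun_prop) (hs.prod ht)]
    have : (fun q : α × α × α => (q.2.1, q.1)) ⁻¹' (s ×ˢ t)
        = t ×ˢ (s ×ˢ (Set.univ : Set α)) := by
      ext q; simp [and_comm]
    rw [this, Measure.prod_prod, Measure.prod_prod, measure_univ, mul_one, mul_comm]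
  have hmapB : (ν.prod (ν.prod ν)).map (fun q : α × α × α => (q.2.2, q.1)) = ν.prod ν := by
    refine (Measure.prod_eq fun s t hs ht => ?_).symm
    rw [Measure.map_apply (by fun_prop) (hs.prod ht)]
    have : (fun q : α × α × α => (q.2.2, q.1)) ⁻¹' (s ×ˢ t)
        = t ×ˢ ((Set.univ : Set α) ×ˢ s) := by
      ext q; simp [and_comm]
    rw [this, Measure.prod_prod, Measure.prod_prod, measure_univ, one_mul, mul_comm]
  -- integrability of H and H^2 over ν × ν
  have hHm : Measurable (fun p : α × α => g p.1 p.2 - m) := hgm.sub measurable_const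
  have hHint : Integrable (fun p : α × α => g p.1 p.2 - m) (ν.prod ν) :=
    hgint.sub (integrable_const m)
  have hHsq : Integrable (fun p : α × α => (g p.1 p.2 - m) ^ 2) (ν.prod ν) := by
    have : (fun p : α × α => (g p.1 p.2 - m) ^ 2)
        = fun p => g p.1 p.2 ^ 2 - (2 * m) * g p.1 p.2 + m ^ 2 := by funext p; ring
    rw [this]
    exact (hgsq.sub (hgint.const_mul _)).add (integrable_const _)
  have hH0 : ∫ p : α × α, (g p.1 p.2 - m) ∂(ν.prod ν) = 0 := by
    rw [integral_sub hgint (integrable_const m), integral_const]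
    simp [hm]
  -- measurability over Ω
  have hmeas : ∀ i j : Fin n, Measurable (fun ω => g (X i ω) (X j ω) - m) :=
    fun i j => (hgm.comp ((hXm i).prodMk (hXm j))).sub measurable_const
  -- integrability over μ
  have hInt : ∀ i j : Fin n, i ≠ j → Integrable (fun ω => g (X i ω) (X j ω) - m) μ := by
    intro i j hij
    have h := integrable_map_measure (μ := μ) (g := fun p : α × α => g p.1 p.2 - m)
      hHm.aestronglyMeasurable ((hXm i).prodMk (hXm j)).aemeasurable
    rw [map2 i j hij] at h
    exact h.mp hHint
  have hIntSq : ∀ i j : Fin n, i ≠ j →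
      Integrable (fun ω => (g (X i ω) (X j ω) - m) ^ 2) μ := by
    intro i j hij
    have h := integrable_map_measure (μ := μ) (g := fun p : α × α => (g p.1 p.2 - m) ^ 2)
      (hHm.pow_const 2).aestronglyMeasurable ((hXm i).prodMk (hXm j)).aemeasurable
    rw [map2 i j hij] at h
    exact h.mp hHsq
  have hInt0 : ∀ i j : Fin n, i ≠ j → ∫ ω, (g (X i ω) (X j ω) - m) ∂μ = 0 := by
    intro i j hij
    have h := integral_map (μ := μ) (f := fun p : α × α => g p.1 p.2 - m)
      ((hXm i).prodMk (hXm j)).aemeasurable hHm.aestronglyMeasurable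
    rw [map2 i j hij] at h
    rw [← h, hH0]
  -- diagonal terms
  have hdiag : ∀ i j : Fin n, i ≠ j →
      ∫ ω, (g (X i ω) (X j ω) - m) ^ 2 ∂μ = ∫ p : α × α, (g p.1 p.2 - m) ^ 2 ∂(ν.prod ν) := by
    intro i j hij
    have h := integral_map (μ := μ) (f := fun p : α × α => (g p.1 p.2 - m) ^ 2)
      ((hXm i).prodMk (hXm j)).aemeasurable (hHm.pow_const 2).aestronglyMeasurable
    rw [map2 i j hij] at h
    rw [← h]
  -- disjoint terms
  have hzero : ∀ i j k l : Fin n, i ≠ j → k ≠ l → i ≠ k → i ≠ l → j ≠ k → j ≠ l →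
      ∫ ω, (g (X i ω) (X j ω) - m) * (g (X k ω) (X l ω) - m) ∂μ = 0 := by
    intro i j k l hij hkl hik hil hjk hjl
    have hind : IndepFun (fun ω => (X i ω, X j ω)) (fun ω => (X k ω, X l ω)) μ :=
      hindep.indepFun_prodMk_prodMk hXm i j k l hik hil hjk hjl
    have hcomp : IndepFun (fun ω => g (X i ω) (X j ω) - m)
        (fun ω => g (X k ω) (X l ω) - m) μ := hind.comp hHm hHm
    have := hcomp.integral_mul_eq_mul_integral (hInt i j hij).aestronglyMeasurable (hInt k l hkl).aestronglyMeasurable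
    rw [show (fun ω => g (X i ω) (X j ω) - m) * (fun ω => g (X k ω) (X l ω) - m)
      = fun ω => (g (X i ω) (X j ω) - m) * (g (X k ω) (X l ω) - m) from rfl] at this
    rw [this, hInt0 i j hij, zero_mul]
  -- shared-index terms
  have hone : ∀ a b c : Fin n, a ≠ b → a ≠ c → b ≠ c →
      ∫ ω, (g (X a ω) (X b ω) - m) * (g (X c ω) (X b ω) - m) ∂μ
      = ∫ x, ((∫ y, g y x ∂ν) - m) ^ 2 ∂ν := by
    intro a b c hab hac hbc
    have hF1m : Measurable (fun q : α × α × α => g q.2.1 q.1 - m) :=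
      (hgm.comp ((measurable_fst.comp measurable_snd).prodMk measurable_fst)).sub
        measurable_const
    have hF2m : Measurable (fun q : α × α × α => g q.2.2 q.1 - m) :=
      (hgm.comp ((measurable_snd.comp measurable_snd).prodMk measurable_fst)).sub
        measurable_const
    have hFm : Measurable (fun q : α × α × α => (g q.2.1 q.1 - m) * (g q.2.2 q.1 - m)) :=
      hF1m.mul hF2m
    have hTm : Measurable (fun ω => (X b ω, (X a ω, X c ω))) :=
      (hXm b).prodMk ((hXm a).prodMk (hXm c))
    have e1 : ∫ ω, (g (X a ω) (X b ω) - m) * (g (X c ω) (X b ω) - m) ∂μ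
        = ∫ q : α × α × α, (g q.2.1 q.1 - m) * (g q.2.2 q.1 - m) ∂(ν.prod (ν.prod ν)) := by
      rw [← map3 a b c hab hac hbc]
      exact (integral_map hTm.aemeasurable hFm.aestronglyMeasurable).symm
    rw [e1]
    -- integrability of the two squared factors over the triple product
    have hA : Integrable (fun q : α × α × α => (g q.2.1 q.1 - m) ^ 2) (ν.prod (ν.prod ν)) := by
      have h := integrable_map_measure (μ := ν.prod (ν.prod ν))
        (g := fun p : α × α => (g p.1 p.2 - m) ^ 2)
        (hHm.pow_const 2).aestronglyMeasurable
        (by fun_prop : AEMeasurable (fun q : α × α × α => (q.2.1, q.1)) (ν.prod (ν.prod ν)))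
      rw [hmapA] at h
      exact h.mp hHsq
    have hB : Integrable (fun q : α × α × α => (g q.2.2 q.1 - m) ^ 2) (ν.prod (ν.prod ν)) := by
      have h := integrable_map_measure (μ := ν.prod (ν.prod ν))
        (g := fun p : α × α => (g p.1 p.2 - m) ^ 2)
        (hHm.pow_const 2).aestronglyMeasurable
        (by fun_prop : AEMeasurable (fun q : α × α × α => (q.2.2, q.1)) (ν.prod (ν.prod ν)))
      rw [hmapB] at h
      exact h.mp hHsq
    have hFint : Integrable (fun q : α × α × α => (g q.2.1 q.1 - m) * (g q.2.2 q.1 - m))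
        (ν.prod (ν.prod ν)) :=
      aux_integrable_mul _ hF1m.aestronglyMeasurable hF2m.aestronglyMeasurable hA hB
    rw [MeasureTheory.integral_prod _ hFint]
    have hinner : ∀ y : α, (∫ r : α × α, (g r.1 y - m) * (g r.2 y - m) ∂(ν.prod ν))
        = (∫ x, (g x y - m) ∂ν) ^ 2 := by
      intro y
      rw [integral_prod_mul (f := fun x => g x y - m) (g := fun z => g z y - m), sq]
    simp_rw [hinner]
    apply integral_congr_ae
    have hsec : ∀ᵐ y ∂ν, Integrable (fun x => g x y) ν :=
      Integrable.prod_left_ae (f := fun p : α × α => g p.1 p.2) hgint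
    filter_upwards [hsec] with y hy
    rw [integral_sub hy (integrable_const m), integral_const, probReal_univ]
    simp
  set S := Finset.univ.filter (fun p : Fin n × Fin n => p.1 < p.2) with hS
  set c : ℝ := 2 / ((n : ℝ) * ((n : ℝ) - 1)) with hc
  -- cardinality facts
  have hcardR : c * ((S.card : ℕ) : ℝ) = 1 := by
    have h2 := aux_two_mul_card n
    rw [← hS] at h2
    have hcast : (2:ℝ) * (S.card : ℝ) = (n:ℝ) * ((n:ℝ) - 1) := by
      have := congrArg (fun k : ℕ => (k : ℝ)) h2
      push_cast [Nat.cast_sub (show 1 ≤ n by omega)] at this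
      simpa using this
    have hn2 : (2:ℝ) ≤ (n:ℝ) := by exact_mod_cast hn
    have hne : (n:ℝ) * ((n:ℝ) - 1) ≠ 0 := by nlinarith
    rw [hc]
    field_simp
    rw [div_eq_iff (by linarith), hcast]
  -- centered U
  have hU' : ∀ ω, U ω - m = c * ∑ p ∈ S, (g (X p.1 ω) (X p.2 ω) - m) := by
    intro ω
    rw [hU ω, Finset.sum_sub_distrib, Finset.sum_const, nsmul_eq_mul, mul_sub,
      ← mul_assoc, hcardR, one_mul]
  -- classification of covariance terms
  have hclass : ∀ p ∈ S, ∀ q ∈ S,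
      (∫ ω, (g (X p.1 ω) (X p.2 ω) - m) * (g (X q.1 ω) (X q.2 ω) - m) ∂μ)
      = ζ₂ * (if q = p then (1:ℝ) else 0)
        + ζ₁ * (if q ≠ p ∧ (q.1 = p.1 ∨ q.1 = p.2 ∨ q.2 = p.1 ∨ q.2 = p.2)
            then (1:ℝ) else 0) := by
    intro p hp q hq
    rw [hS, Finset.mem_filter] at hp hq
    have hp2 := hp.2
    have hq2 := hq.2
    by_cases hqp : q = p
    · subst hqp
      rw [if_pos rfl, if_neg (by simp), mul_one, mul_zero, add_zero, hζ₂,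
        ← hdiag q.1 q.2 (ne_of_lt hq2)]
      apply integral_congr_ae
      filter_upwards with ω
      ring
    · rw [if_neg hqp, mul_zero, zero_add]
      have hqp' : ¬(q.1 = p.1 ∧ q.2 = p.2) := by
        intro h; exact hqp (Prod.ext h.1 h.2)
      by_cases hsh : q.1 = p.1 ∨ q.1 = p.2 ∨ q.2 = p.1 ∨ q.2 = p.2
      · rw [if_pos ⟨hqp, hsh⟩, mul_one, hζ₁]
        rcases hsh with h | h | h | h
        · -- q.1 = p.1
          have h1 : p.2 ≠ p.1 := (ne_of_lt hp2).symm
          have h2 : p.2 ≠ q.2 := by intro hh; exact hqp' ⟨h, hh.symm⟩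
          have h3 : p.1 ≠ q.2 := ne_of_lt (h ▸ hq2)
          rw [← hone p.2 p.1 q.2 h1 h2 h3]
          apply integral_congr_ae
          filter_upwards with ω
          rw [hsymm (X p.1 ω) (X p.2 ω), h, hsymm (X p.1 ω) (X q.2 ω)]
        · -- q.1 = p.2
          have h1 : p.1 ≠ p.2 := ne_of_lt hp2
          have h2 : p.1 ≠ q.2 := ne_of_lt (lt_trans hp2 (h ▸ hq2))
          have h3 : p.2 ≠ q.2 := ne_of_lt (h ▸ hq2)
          rw [← hone p.1 p.2 q.2 h1 h2 h3]
          apply integral_congr_ae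
          filter_upwards with ω
          rw [h, hsymm (X p.2 ω) (X q.2 ω)]
        · -- q.2 = p.1
          have h1 : p.2 ≠ p.1 := (ne_of_lt hp2).symm
          have h2 : p.2 ≠ q.1 := (ne_of_lt (lt_trans hq2 (h ▸ hp2))).symm
          have h3 : p.1 ≠ q.1 := (ne_of_lt (h ▸ hq2)).symm
          rw [← hone p.2 p.1 q.1 h1 h2 h3]
          apply integral_congr_ae
          filter_upwards with ω
          rw [hsymm (X p.1 ω) (X p.2 ω), h]
        · -- q.2 = p.2
          have h1 : p.1 ≠ p.2 := ne_of_lt hp2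
          have h2 : p.1 ≠ q.1 := by intro hh; exact hqp' ⟨hh.symm, h⟩
          have h3 : p.2 ≠ q.1 := (ne_of_lt (h ▸ hq2)).symm
          rw [← hone p.1 p.2 q.1 h1 h2 h3]
          apply integral_congr_ae
          filter_upwards with ω
          rw [h]
      · rw [if_neg (by tauto), mul_zero]
        push_neg at hsh
        exact hzero p.1 p.2 q.1 q.2 (ne_of_lt hp2) (ne_of_lt hq2)
          (Ne.symm hsh.1) (Ne.symm hsh.2.2.1) (Ne.symm hsh.2.1) (Ne.symm hsh.2.2.2)
  -- integrability of the products over μ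
  have hprod_int : ∀ r : (Fin n × Fin n) × (Fin n × Fin n), r ∈ S ×ˢ S →
      Integrable (fun ω => (g (X r.1.1 ω) (X r.1.2 ω) - m)
        * (g (X r.2.1 ω) (X r.2.2 ω) - m)) μ := by
    intro r hr
    rw [Finset.mem_product, hS, Finset.mem_filter, Finset.mem_filter] at hr
    exact aux_integrable_mul μ (hmeas _ _).aestronglyMeasurable (hmeas _ _).aestronglyMeasurable
      (hIntSq _ _ (ne_of_lt hr.1.2)) (hIntSq _ _ (ne_of_lt hr.2.2))
  -- the sum of all covariance terms
  have hTsum : ∑ r ∈ S ×ˢ S, (∫ ω, (g (X r.1.1 ω) (X r.1.2 ω) - m)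
        * (g (X r.2.1 ω) (X r.2.2 ω) - m) ∂μ)
      = (S.card : ℝ) * (ζ₂ + ζ₁ * (2 * ((n:ℝ) - 2))) := by
    rw [Finset.sum_product]
    have inner : ∀ p ∈ S, ∑ q ∈ S, (∫ ω, (g (X p.1 ω) (X p.2 ω) - m)
          * (g (X q.1 ω) (X q.2 ω) - m) ∂μ) = ζ₂ + ζ₁ * (2 * ((n:ℝ) - 2)) := by
      intro p hp
      rw [Finset.sum_congr rfl (fun q hq => hclass p hp q hq), Finset.sum_add_distrib,
        ← Finset.mul_sum, ← Finset.mul_sum, Finset.sum_ite_eq' S p (fun _ => (1:ℝ)),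
        if_pos hp, Finset.sum_boole]
      have hp2 : p.1 < p.2 := by
        rw [hS, Finset.mem_filter] at hp; exact hp.2
      have hcs := aux_card_shares n p hp2
      rw [← hS] at hcs
      rw [hcs]
      have : ((2 * (n - 2) : ℕ) : ℝ) = 2 * ((n:ℝ) - 2) := by
        push_cast [Nat.cast_sub hn]
        ring
      rw [this, mul_one]
    rw [Finset.sum_congr rfl inner, Finset.sum_const, nsmul_eq_mul]
  -- putting it together
  calc ∫ ω, (U ω - m) ^ 2 ∂μ
      = ∫ ω, ∑ r ∈ S ×ˢ S, c ^ 2 * ((g (X r.1.1 ω) (X r.1.2 ω) - m)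
          * (g (X r.2.1 ω) (X r.2.2 ω) - m)) ∂μ := by
        apply integral_congr_ae
        filter_upwards with ω
        rw [hU' ω, mul_pow, sq (∑ p ∈ S, (g (X p.1 ω) (X p.2 ω) - m)),
          Finset.sum_mul_sum, ← Finset.sum_product', Finset.mul_sum]
    _ = ∑ r ∈ S ×ˢ S, c ^ 2 * (∫ ω, (g (X r.1.1 ω) (X r.1.2 ω) - m)
          * (g (X r.2.1 ω) (X r.2.2 ω) - m) ∂μ) := by
        rw [integral_finset_sum _ (fun r hr => ((hprod_int r hr).const_mul _))]
        exact Finset.sum_congr rfl fun r hr => integral_const_mul _ _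
    _ = c ^ 2 * ((S.card : ℝ) * (ζ₂ + ζ₁ * (2 * ((n:ℝ) - 2)))) := by
        rw [← Finset.mul_sum, hTsum]
    _ = (c * (S.card : ℝ)) * (c * (ζ₂ + ζ₁ * (2 * ((n:ℝ) - 2)))) := by ring
    _ = c * (2 * ((n : ℝ) - 2) * ζ₁ + ζ₂) := by rw [hcardR]; ring
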